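/- Let X be a finite indecomposable q-cycle set with |X| > 1 whose permutation group G(X) is abelian and acts regularly on X. Then X is multipermutational: there exists n with |Ret^n(X)| = 1. -/

import Mathlib

def qcsRel {X : Type*} (σ δ : X → Equiv.Perm X) : ℕ → X → X → Prop
  | 0, x, y => x = y
  | k + 1, x, y => ∀ z : X, qcsRel σ δ k (σ x z) (σ y z) ∧ qcsRel σ δ k (δ x z) (δ y z)

namespace QcsAux

variable {X : Type*} (σ δ : X → Equiv.Perm X)

lemma rel_refl : ∀ k (x : X), qcsRel σ δ k x x := by
  intro k
  induction k with
  | zero => intro x; rfl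
  | succ k ih => intro x z; exact ⟨ih _, ih _⟩

lemma rel_symm : ∀ k {x y : X}, qcsRel σ δ k x y → qcsRel σ δ k y x := by
  intro k
  induction k with
  | zero => intro x y h; exact h.symm
  | succ k ih => intro x y h z; exact ⟨ih (h z).1, ih (h z).2⟩

lemma rel_trans : ∀ k {x y z : X}, qcsRel σ δ k x y → qcsRel σ δ k y z → qcsRel σ δ k x z := by
  intro k
  induction k with
  | zero => intro x y z h h'; exact h.trans h'
  | succ k ih => intro x y z h h' u; exact ⟨ih (h u).1 (h' u).1, ih (h u).2 (h' u).2⟩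

lemma rel_mono : ∀ k {x y : X}, qcsRel σ δ k x y → qcsRel σ δ (k+1) x y := by
  intro k
  induction k with
  | zero => intro x y h; subst h; exact rel_refl σ δ _ x
  | succ k ih => intro x y h z; exact ⟨ih (h z).1, ih (h z).2⟩

section Inv

variable (q1 : ∀ x y z : X, σ (σ x y) (σ x z) = σ (δ y x) (σ y z))
    (q2 : ∀ x y z : X, δ (δ x y) (δ x z) = δ (σ y x) (δ y z))
    (q3 : ∀ x y z : X, δ (σ x y) (σ x z) = σ (δ y x) (δ y z))

include q1 q2 q3

lemma rel_inv : ∀ k (z : X) {x y : X}, qcsRel σ δ k x y →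
    qcsRel σ δ k (σ z x) (σ z y) ∧ qcsRel σ δ k (δ z x) (δ z y) := by
  intro k
  induction k with
  | zero => intro z x y h; subst h; exact ⟨rfl, rfl⟩
  | succ k ih =>
    intro z x y h
    constructor
    · intro u
      obtain ⟨u', rfl⟩ : ∃ u', u = σ z u' := ⟨(σ z).symm u, ((σ z).apply_symm_apply u).symm⟩
      constructor
      · rw [q1 z x u', q1 z y u']
        exact rel_trans σ δ k (ih (δ x z) (h u').1).1
          ((rel_mono σ δ k (h z).2 (σ y u')).1)
      · rw [q3 z x u', q3 z y u']
        exact rel_trans σ δ k (ih (δ x z) (h u').2).1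
          ((rel_mono σ δ k (h z).2 (δ y u')).1)
    · intro u
      obtain ⟨u', rfl⟩ : ∃ u', u = δ z u' := ⟨(δ z).symm u, ((δ z).apply_symm_apply u).symm⟩
      constructor
      · rw [← q3 x z u', ← q3 y z u']
        exact rel_trans σ δ k (ih (σ x z) (h u').1).2
          ((rel_mono σ δ k (h z).1 (σ y u')).2)
      · rw [q2 z x u', q2 z y u']
        exact rel_trans σ δ k (ih (σ x z) (h u').2).2
          ((rel_mono σ δ k (h z).1 (δ y u')).2)

lemma rel_invG [Finite X] (k : ℕ) (g : Equiv.Perm X)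
    (hg : g ∈ Subgroup.closure {g : Equiv.Perm X | ∃ x, g = σ x ∨ g = δ x}) :
    ∀ {a b : X}, qcsRel σ δ k a b → qcsRel σ δ k (g a) (g b) := by
  induction hg using Subgroup.closure_induction with
  | mem x hx =>
    obtain ⟨z, rfl | rfl⟩ := hx
    · intro a b h; exact (rel_inv σ δ q1 q2 q3 k z h).1
    · intro a b h; exact (rel_inv σ δ q1 q2 q3 k z h).2
  | one => intro a b h; simpa using h
  | mul x y _ _ hx hy =>
    intro a b h
    have := hx (hy h)
    simpa [Equiv.Perm.mul_apply] using this
  | inv x _ hx =>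
    -- x⁻¹ is a power of x since Perm X is finite
    have hpow : ∀ m : ℕ, ∀ {a b : X}, qcsRel σ δ k a b → qcsRel σ δ k ((x ^ m) a) ((x ^ m) b) := by
      intro m
      induction m with
      | zero => intro a b h; simpa using h
      | succ m ih =>
        intro a b h
        have := hx (ih h)
        rw [pow_succ']
        simpa [Equiv.Perm.mul_apply] using this
    have hx1 : x ^ orderOf x = 1 := pow_orderOf_eq_one x
    have hpos : 0 < orderOf x := orderOf_pos x
    have hinv : x⁻¹ = x ^ (orderOf x - 1) := by
      have : x * x ^ (orderOf x - 1) = 1 := by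
        rw [← pow_succ', Nat.sub_add_cancel hpos, hx1]
      exact (eq_inv_of_mul_eq_one_left (by rw [← this]; group)).symm
    intro a b h
    rw [hinv]
    exact hpow _ h

end Inv


lemma core [Fintype X] [Nonempty X]
    (q1 : ∀ x y z : X, σ (σ x y) (σ x z) = σ (δ y x) (σ y z))
    (q2 : ∀ x y z : X, δ (δ x y) (δ x z) = δ (σ y x) (δ y z))
    (q3 : ∀ x y z : X, δ (σ x y) (σ x z) = σ (δ y x) (δ y z))
    (htrans : ∀ x y : X,
      ∃ g ∈ Subgroup.closure {g : Equiv.Perm X | ∃ x, g = σ x ∨ g = δ x}, g x = y)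
    (habel : ∀ g ∈ Subgroup.closure {g : Equiv.Perm X | ∃ x, g = σ x ∨ g = δ x},
      ∀ h ∈ Subgroup.closure {g : Equiv.Perm X | ∃ x, g = σ x ∨ g = δ x},
      g * h = h * g)
    (R : X → X → Prop)
    (hrefl : ∀ x, R x x) (hsymm : ∀ x y, R x y → R y x)
    (htrns : ∀ x y z, R x y → R y z → R x z)
    (hinv : ∀ g ∈ Subgroup.closure {g : Equiv.Perm X | ∃ x, g = σ x ∨ g = δ x},
      ∀ a b, R a b → R (g a) (g b))
    (hfix : ∀ x y, (∀ z, R (σ x z) (σ y z) ∧ R (δ x z) (δ y z)) → R x y)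
    (hE4 : ∀ x y, R x y → ∀ z, R (σ x z) (σ y z) ∧ R (δ x z) (δ y z)) :
    ∀ x y, R x y := by
  set C := Subgroup.closure {g : Equiv.Perm X | ∃ x, g = σ x ∨ g = δ x} with hC
  have hσm : ∀ x, σ x ∈ C := fun x => Subgroup.subset_closure ⟨x, Or.inl rfl⟩
  have hδm : ∀ x, δ x ∈ C := fun x => Subgroup.subset_closure ⟨x, Or.inr rfl⟩
  -- permutation-level versions of the axioms
  have A' : ∀ x y : X, σ (σ x y) * σ x = σ (δ y x) * σ y := fun x y =>
    Equiv.ext fun z => by simpa [Equiv.Perm.mul_apply] using q1 x y z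
  have B' : ∀ x y : X, δ (δ x y) * δ x = δ (σ y x) * δ y := fun x y =>
    Equiv.ext fun z => by simpa [Equiv.Perm.mul_apply] using q2 x y z
  have C' : ∀ x y : X, δ (σ x y) * σ x = σ (δ y x) * δ y := fun x y =>
    Equiv.ext fun z => by simpa [Equiv.Perm.mul_apply] using q3 x y z
  -- the "ratio" ε x = σ x * (δ x)⁻¹ is constant
  have εσ : ∀ x y : X, σ (σ x y) * (δ (σ x y))⁻¹ = σ y * (δ y)⁻¹ := by
    intro x y
    have hcomm : σ (δ y x) * (σ y * (δ y)⁻¹) = (σ y * (δ y)⁻¹) * σ (δ y x) :=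
      habel _ (hσm _) _ (Subgroup.mul_mem _ (hσm y) (Subgroup.inv_mem _ (hδm y)))
    calc σ (σ x y) * (δ (σ x y))⁻¹
        = (σ (σ x y) * σ x) * (δ (σ x y) * σ x)⁻¹ := by group
      _ = (σ (δ y x) * σ y) * (σ (δ y x) * δ y)⁻¹ := by rw [A' x y, C' x y]
      _ = σ (δ y x) * (σ y * (δ y)⁻¹) * (σ (δ y x))⁻¹ := by group
      _ = σ y * (δ y)⁻¹ := by rw [hcomm, mul_inv_cancel_right]
  have εδ : ∀ x y : X, σ (δ x y) * (δ (δ x y))⁻¹ = σ y * (δ y)⁻¹ := by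
    intro x y
    have hcomm : δ (σ y x) * (σ y * (δ y)⁻¹) = (σ y * (δ y)⁻¹) * δ (σ y x) :=
      habel _ (hδm _) _ (Subgroup.mul_mem _ (hσm y) (Subgroup.inv_mem _ (hδm y)))
    calc σ (δ x y) * (δ (δ x y))⁻¹
        = (σ (δ x y) * δ x) * (δ (δ x y) * δ x)⁻¹ := by group
      _ = (δ (σ y x) * σ y) * (δ (σ y x) * δ y)⁻¹ := by rw [← C' y x, B' x y]
      _ = δ (σ y x) * (σ y * (δ y)⁻¹) * (δ (σ y x))⁻¹ := by group
      _ = σ y * (δ y)⁻¹ := by rw [hcomm, mul_inv_cancel_right]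
  have εconst : ∀ g ∈ C, ∀ x : X, σ (g x) * (δ (g x))⁻¹ = σ x * (δ x)⁻¹ := by
    intro g hg
    induction hg using Subgroup.closure_induction with
    | mem w hw =>
      obtain ⟨z, rfl | rfl⟩ := hw
      · exact fun x => εσ z x
      · exact fun x => εδ z x
    | one => intro x; simp
    | mul a b _ _ ha hb =>
      intro x
      have : σ ((a * b) x) * (δ ((a * b) x))⁻¹ = σ (a (b x)) * (δ (a (b x)))⁻¹ := by
        rw [Equiv.Perm.mul_apply]
      rw [this, ha (b x), hb x]
    | inv a _ ha =>
      intro x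
      have := ha (a⁻¹ x)
      rw [← Equiv.Perm.mul_apply, mul_inv_cancel, Equiv.Perm.one_apply] at this
      exact this.symm
  obtain ⟨x0⟩ := (inferInstance : Nonempty X)
  set c : Equiv.Perm X := σ x0 * (δ x0)⁻¹ with hc
  have hcC : c ∈ C := Subgroup.mul_mem _ (hσm x0) (Subgroup.inv_mem _ (hδm x0))
  have hev : ∀ x : X, σ x * (δ x)⁻¹ = c := by
    intro x
    obtain ⟨g, hg, hgx⟩ := htrans x0 x
    rw [← hgx]
    exact εconst g hg x0
  have key : ∀ x : X, σ x = c * δ x := by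
    intro x
    rw [← hev x]; group
  have keyapp : ∀ (a z : X), σ a z = c (δ a z) := by
    intro a z
    rw [key a]; rfl
  -- c acts trivially mod R
  have hσeq : σ (σ x0 x0) = σ (δ x0 x0) :=
    mul_right_cancel (A' x0 x0)
  have hδeq : δ (σ x0 x0) = δ (δ x0 x0) := by
    have h1 : δ (σ x0 x0) = c⁻¹ * σ (σ x0 x0) := by rw [key (σ x0 x0)]; group
    have h2 : δ (δ x0 x0) = c⁻¹ * σ (δ x0 x0) := by rw [key (δ x0 x0)]; group
    rw [h1, h2, hσeq]
  have hw : R (σ x0 x0) (δ x0 x0) :=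
    hfix _ _ (fun z => ⟨by rw [hσeq]; exact hrefl _, by rw [hδeq]; exact hrefl _⟩)
  have hww : R (σ x0 x0) (c⁻¹ (σ x0 x0)) := by
    have hd : δ x0 x0 = c⁻¹ (σ x0 x0) := by
      have : δ x0 = c⁻¹ * σ x0 := by rw [key x0]; group
      rw [this]; rfl
    rwa [hd] at hw
  have hcp : ∀ p : X, R p (c⁻¹ p) := by
    intro p
    obtain ⟨g, hg, hgp⟩ := htrans (σ x0 x0) p
    have h1 := hinv g hg _ _ hww
    have h2 : g (c⁻¹ (σ x0 x0)) = c⁻¹ p := by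
      have hcomm : g * c⁻¹ = c⁻¹ * g :=
        habel g hg c⁻¹ (Subgroup.inv_mem _ hcC)
      calc g (c⁻¹ (σ x0 x0)) = (g * c⁻¹) (σ x0 x0) := rfl
        _ = (c⁻¹ * g) (σ x0 x0) := by rw [hcomm]
        _ = c⁻¹ (g (σ x0 x0)) := rfl
        _ = c⁻¹ p := by rw [hgp]
    rw [hgp, h2] at h1
    exact h1
  have hcp' : ∀ p : X, R (c p) p := by
    intro p
    have := hcp (c p)
    rwa [← Equiv.Perm.mul_apply, inv_mul_cancel, Equiv.Perm.one_apply] at this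
  -- injectivity of y ↦ δ y p mod R
  have injδ : ∀ (p y y' : X), R (δ y p) (δ y' p) → R y y' := by
    intro p y y' h
    apply hfix
    intro z
    obtain ⟨g, hg, hgp⟩ := htrans p z
    have hcm : ∀ u : X, δ u (g p) = g (δ u p) := by
      intro u
      have hcomm : δ u * g = g * δ u := habel _ (hδm u) g hg
      calc δ u (g p) = (δ u * g) p := rfl
        _ = (g * δ u) p := by rw [hcomm]
        _ = g (δ u p) := rfl
    have hδz : R (δ y z) (δ y' z) := by
      rw [← hgp, hcm y, hcm y']
      exact hinv g hg _ _ h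
    refine ⟨?_, hδz⟩
    rw [keyapp y z, keyapp y' z]
    exact hinv c hcC _ _ hδz
  -- find y0 with δ y0 ≡ 1 mod R
  have hequiv : Equivalence R := ⟨hrefl, fun {a b} h => hsymm a b h,
    fun {a b d} h h' => htrns a b d h h'⟩
  let s : Setoid X := ⟨R, hequiv⟩
  let F : Quotient s → Quotient s :=
    Quotient.map (fun y => δ y x0) (fun y y' h => (hE4 y y' h x0).2)
  have hFinj : Function.Injective F := by
    intro a b
    refine Quotient.inductionOn₂ a b ?_
    intro y y' h
    exact Quotient.sound (injδ x0 y y' (Quotient.exact h))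
  have hFsur : Function.Surjective F := Finite.injective_iff_surjective.mp hFinj
  obtain ⟨q, hq⟩ := hFsur (Quotient.mk s x0)
  obtain ⟨y0, rfl⟩ := q.exists_rep
  have hy00 : R (δ y0 x0) x0 := Quotient.exact hq
  have hy0z : ∀ z : X, R (δ y0 z) z := by
    intro z
    obtain ⟨g, hg, hgz⟩ := htrans x0 z
    have hcomm : δ y0 * g = g * δ y0 := habel _ (hδm y0) g hg
    have h1 : δ y0 z = g (δ y0 x0) := by
      rw [← hgz]
      calc δ y0 (g x0) = (δ y0 * g) x0 := rfl
        _ = (g * δ y0) x0 := by rw [hcomm]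
        _ = g (δ y0 x0) := rfl
    rw [h1, ← hgz]
    exact hinv g hg _ _ hy00
  have hσy0 : ∀ x : X, R (σ y0 x) x := by
    intro x
    rw [keyapp y0 x]
    exact htrns _ _ _ (hinv c hcC _ _ (hy0z x)) (hcp' x)
  have step : ∀ x w : X, R (δ (δ x y0) w) w := by
    intro x w
    obtain ⟨z, rfl⟩ : ∃ z, w = δ x z := ⟨(δ x).symm w, ((δ x).apply_symm_apply w).symm⟩
    rw [q2 x y0 z]
    exact htrns _ _ _ (hinv _ (hδm (σ y0 x)) _ _ (hy0z z)) ((hE4 _ _ (hσy0 x) z).2)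
  have hxy0 : ∀ x : X, R (δ x y0) y0 := by
    intro x
    apply hfix
    intro z
    have hδ : R (δ (δ x y0) z) (δ y0 z) :=
      htrns _ _ _ (step x z) (hsymm _ _ (hy0z z))
    refine ⟨?_, hδ⟩
    rw [keyapp (δ x y0) z, keyapp y0 z]
    exact hinv c hcC _ _ hδ
  intro x y
  exact injδ y0 x y (htrns _ _ _ (hxy0 x) (hsymm _ _ (hxy0 y)))

end QcsAux

theorem qcs_abelian_multipermutational {X : Type*} [Fintype X]
    (hX : 1 < Fintype.card X)
    (σ δ : X → Equiv.Perm X)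
    (q1 : ∀ x y z : X, σ (σ x y) (σ x z) = σ (δ y x) (σ y z))
    (q2 : ∀ x y z : X, δ (δ x y) (δ x z) = δ (σ y x) (δ y z))
    (q3 : ∀ x y z : X, δ (σ x y) (σ x z) = σ (δ y x) (δ y z))
    (htrans : ∀ x y : X,
      ∃ g ∈ Subgroup.closure {g : Equiv.Perm X | ∃ x, g = σ x ∨ g = δ x}, g x = y)
    (hreg : ∀ g ∈ Subgroup.closure {g : Equiv.Perm X | ∃ x, g = σ x ∨ g = δ x},
      ∀ x : X, g x = x → g = 1)
    (habel : ∀ g ∈ Subgroup.closure {g : Equiv.Perm X | ∃ x, g = σ x ∨ g = δ x},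
      ∀ h ∈ Subgroup.closure {g : Equiv.Perm X | ∃ x, g = σ x ∨ g = δ x},
      g * h = h * g) :
    ∃ n : ℕ, ∀ x y : X, qcsRel σ δ n x y := by
  have hne : Nonempty X := Fintype.card_pos_iff.mp (by omega)
  set S : ℕ → Set (X × X) := fun k => {p | qcsRel σ δ k p.1 p.2} with hS
  have hmonoS : ∀ k, S k ⊆ S (k+1) := fun k p hp => QcsAux.rel_mono σ δ k hp
  set f : ℕ → ℕ := fun k => (S k).ncard with hf
  have hfmono : ∀ k, f k ≤ f (k+1) := fun k => Set.ncard_le_ncard (hmonoS k) (Set.toFinite _)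
  have hbd : ∀ k, f k ≤ Nat.card (X × X) := by
    intro k
    have := Set.ncard_le_ncard (Set.subset_univ (S k)) (Set.toFinite _)
    simpa [Set.ncard_univ] using this
  have hex : ∃ k, f k = f (k+1) := by
    by_contra hco
    push_neg at hco
    have hlt : ∀ k, f k < f (k+1) := fun k => lt_of_le_of_ne (hfmono k) (hco k)
    have hge : ∀ k, k ≤ f k := by
      intro k
      induction k with
      | zero => exact Nat.zero_le _
      | succ k ih => have := hlt k; omega
    have h1 := hge (Nat.card (X × X) + 1)
    have h2 := hbd (Nat.card (X × X) + 1)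
    omega
  obtain ⟨k, hk⟩ := hex
  have hSeq : S k = S (k+1) :=
    Set.eq_of_subset_of_ncard_le (hmonoS k) (le_of_eq hk.symm) (Set.toFinite _)
  have hfix : ∀ x y : X, (∀ z, qcsRel σ δ k (σ x z) (σ y z) ∧ qcsRel σ δ k (δ x z) (δ y z)) →
      qcsRel σ δ k x y := by
    intro x y h
    have hmem : (x, y) ∈ S (k+1) := h
    rw [← hSeq] at hmem
    exact hmem
  refine ⟨k, QcsAux.core σ δ q1 q2 q3 htrans habel (qcsRel σ δ k)
    (QcsAux.rel_refl σ δ k) (fun x y h => QcsAux.rel_symm σ δ k h)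
    (fun x y z h h' => QcsAux.rel_trans σ δ k h h')
    (fun g hg a b h => QcsAux.rel_invG σ δ q1 q2 q3 k g hg h)
    hfix
    (fun x y h z => QcsAux.rel_mono σ δ k h z)⟩
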